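/- For every natural number n ≥ 0, b_n({12, 1̄2̄}) = b_n({12, 2̄1̄}) = C(2n, n), the central binomial coefficient. -/

import Mathlib

/-- A signed permutation of length `n`: a permutation of `Fin n` (the absolute
values) together with a sign (bar) for each position. -/
abbrev SignedPerm (n : ℕ) := Equiv.Perm (Fin n) × (Fin n → Bool)

/-- `α` contains the signed pattern `τ`. -/
def SPContains {n k : ℕ} (α : SignedPerm n) (τ : SignedPerm k) : Prop :=
  ∃ f : Fin k → Fin n, StrictMono f ∧
    (∀ p q : Fin k, τ.1 p < τ.1 q ↔ α.1 (f p) < α.1 (f q)) ∧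
    ∀ j : Fin k, α.2 (f j) = τ.2 j

/-- `α` avoids every pattern in `T`. -/
def AvoidsAll {n k : ℕ} (T : Set (SignedPerm k)) (α : SignedPerm n) : Prop :=
  ∀ τ ∈ T, ¬ SPContains α τ

/-- `bn n T` is the number of signed permutations in `B_n` avoiding all patterns of `T`. -/
noncomputable def bn (n : ℕ) (T : Set (SignedPerm 2)) : ℕ :=
  Nat.card {α : SignedPerm n // AvoidsAll T α}

def p12   : SignedPerm 2 := (Equiv.refl (Fin 2), ![false, false])
def p21   : SignedPerm 2 := (Equiv.swap 0 1,     ![false, false])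
def p12b  : SignedPerm 2 := (Equiv.refl (Fin 2), ![false, true])
def p1b2  : SignedPerm 2 := (Equiv.refl (Fin 2), ![true, false])
def p21b  : SignedPerm 2 := (Equiv.swap 0 1,     ![false, true])
def p2b1  : SignedPerm 2 := (Equiv.swap 0 1,     ![true, false])
def p1b2b : SignedPerm 2 := (Equiv.refl (Fin 2), ![true, true])
def p2b1b : SignedPerm 2 := (Equiv.swap 0 1,     ![true, true])


-- ===== auxiliary development =====

open Finset

section Aux

variable {n : ℕ}

lemma contains_refl_iff (α : SignedPerm n) (b0 b1 : Bool) :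
    SPContains α (Equiv.refl (Fin 2), ![b0, b1]) ↔
      ∃ i j : Fin n, i < j ∧ α.1 i < α.1 j ∧ α.2 i = b0 ∧ α.2 j = b1 := by
  constructor
  · rintro ⟨f, hmono, hiff, hsign⟩
    refine ⟨f 0, f 1, hmono (by decide), ?_, ?_, ?_⟩
    · have := (hiff 0 1).1; simp at this; exact this
    · simpa using hsign 0
    · simpa using hsign 1
  · rintro ⟨i, j, hij, hlt, h0, h1⟩
    refine ⟨![i, j], ?_, ?_, ?_⟩
    · intro p q hpq
      fin_cases p <;> fin_cases q <;> simp_all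
    · intro p q
      fin_cases p <;> fin_cases q <;>
        simp [Fin.lt_def, lt_irrefl, hlt, lt_asymm hlt]
    · intro p; fin_cases p <;> simp [h0, h1]

lemma contains_swap_iff (α : SignedPerm n) (b0 b1 : Bool) :
    SPContains α (Equiv.swap (0 : Fin 2) 1, ![b0, b1]) ↔
      ∃ i j : Fin n, i < j ∧ α.1 j < α.1 i ∧ α.2 i = b0 ∧ α.2 j = b1 := by
  constructor
  · rintro ⟨f, hmono, hiff, hsign⟩
    refine ⟨f 0, f 1, hmono (by decide), ?_, ?_, ?_⟩
    · have := (hiff 1 0).1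
      simp [Equiv.swap_apply_left, Equiv.swap_apply_right] at this; exact this
    · simpa using hsign 0
    · simpa using hsign 1
  · rintro ⟨i, j, hij, hlt, h0, h1⟩
    refine ⟨![i, j], ?_, ?_, ?_⟩
    · intro p q hpq
      fin_cases p <;> fin_cases q <;> simp_all
    · intro p q
      fin_cases p <;> fin_cases q <;>
        simp [Fin.lt_def, Equiv.swap_apply_left, Equiv.swap_apply_right,
          lt_irrefl, hlt, lt_asymm hlt]
    · intro p; fin_cases p <;> simp [h0, h1]

noncomputable def pieceEquiv (s t : Finset (Fin n)) (h : s.card = t.card) (inc : Bool) :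
    {x // x ∈ s} ≃ {x // x ∈ t} :=
  (s.orderIsoOfFin rfl).symm.toEquiv.trans
    (((if inc then Equiv.refl (Fin s.card) else Fin.revPerm) : Equiv.Perm (Fin s.card)).trans
      (t.orderIsoOfFin h.symm).toEquiv)

lemma card_compl_eq {A B : Finset (Fin n)} (h : A.card = B.card) : Aᶜ.card = Bᶜ.card := by
  simp [Finset.card_compl, h]

noncomputable def buildPerm (A B : Finset (Fin n)) (h : A.card = B.card) (d : Bool → Bool) :
    Equiv.Perm (Fin n) :=
  (Equiv.sumCompl (· ∈ A)).symm.trans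
    ((Equiv.sumCongr (pieceEquiv A B h (d true))
      ((Equiv.subtypeEquivRight (fun x => (Finset.mem_compl (s := A) (a := x)).symm)).trans
        ((pieceEquiv Aᶜ Bᶜ (card_compl_eq h) (d false)).trans
          (Equiv.subtypeEquivRight (fun x => Finset.mem_compl (s := B) (a := x)))))).trans
      (Equiv.sumCompl (· ∈ B)))

lemma buildPerm_apply_mem {A B : Finset (Fin n)} (h : A.card = B.card) (d : Bool → Bool)
    {i : Fin n} (hi : i ∈ A) :
    buildPerm A B h d i = (pieceEquiv A B h (d true) ⟨i, hi⟩ : Fin n) := by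
  simp [buildPerm, Equiv.sumCompl_symm_apply_of_pos (p := (· ∈ A)) hi]

lemma buildPerm_apply_not_mem {A B : Finset (Fin n)} (h : A.card = B.card) (d : Bool → Bool)
    {i : Fin n} (hi : i ∉ A) :
    buildPerm A B h d i =
      (pieceEquiv Aᶜ Bᶜ (card_compl_eq h) (d false) ⟨i, Finset.mem_compl.mpr hi⟩ : Fin n) := by
  simp [buildPerm, Equiv.sumCompl_symm_apply_of_neg (p := (· ∈ A)) hi, Equiv.subtypeEquivRight]
  rfl

/-- The sign classes of `α` are monotone in the direction prescribed by `d`. -/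
def Good (d : Bool → Bool) {n : ℕ} (α : SignedPerm n) : Prop :=
  ∀ i j : Fin n, i < j → α.2 i = α.2 j →
    if d (α.2 i) then α.1 i < α.1 j else α.1 j < α.1 i

lemma pieceEquiv_lt {s t : Finset (Fin n)} {h : s.card = t.card} {inc : Bool}
    {x y : {x // x ∈ s}} (hxy : (x : Fin n) < y) :
    if inc then ((pieceEquiv s t h inc x : Fin n) < pieceEquiv s t h inc y)
    else ((pieceEquiv s t h inc y : Fin n) < pieceEquiv s t h inc x) := by
  have hx : x < y := Subtype.coe_lt_coe.mp hxy
  have h1 : (s.orderIsoOfFin rfl).symm x < (s.orderIsoOfFin rfl).symm y :=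
    (s.orderIsoOfFin rfl).symm.strictMono hx
  cases inc with
  | true =>
    simp only [pieceEquiv, if_true]
    have : (t.orderIsoOfFin h.symm) (Equiv.refl _ ((s.orderIsoOfFin rfl).symm x)) <
        (t.orderIsoOfFin h.symm) (Equiv.refl _ ((s.orderIsoOfFin rfl).symm y)) :=
      (t.orderIsoOfFin h.symm).strictMono (by simpa using h1)
    simpa using Subtype.coe_lt_coe.mpr this
  | false =>
    simp only [pieceEquiv, if_false]
    have hrev : ((s.orderIsoOfFin rfl).symm y).rev < ((s.orderIsoOfFin rfl).symm x).rev :=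
      Fin.rev_lt_rev.mpr h1
    have : (t.orderIsoOfFin h.symm) (Fin.revPerm ((s.orderIsoOfFin rfl).symm y)) <
        (t.orderIsoOfFin h.symm) (Fin.revPerm ((s.orderIsoOfFin rfl).symm x)) :=
      (t.orderIsoOfFin h.symm).strictMono (by simpa using hrev)
    simpa using Subtype.coe_lt_coe.mpr this

lemma good_buildPerm (A B : Finset (Fin n)) (h : A.card = B.card) (d : Bool → Bool) :
    Good d ((buildPerm A B h d, fun i => decide (i ∈ A)) : SignedPerm n) := by
  intro i j hij hsign
  simp only at hsign ⊢
  by_cases hi : i ∈ A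
  · have hj : j ∈ A := by
      by_contra hj
      simp [hi, hj] at hsign
    rw [buildPerm_apply_mem h d hi, buildPerm_apply_mem h d hj]
    simp only [hi, decide_eq_true_eq]
    have := pieceEquiv_lt (s := A) (t := B) (h := h) (inc := d true)
      (x := ⟨i, hi⟩) (y := ⟨j, hj⟩) hij
    cases hd : d true <;> simp [hd] at this ⊢ <;> exact this
  · have hj : j ∉ A := by
      by_contra hj
      simp [hi, hj] at hsign
    rw [buildPerm_apply_not_mem h d hi, buildPerm_apply_not_mem h d hj]
    simp only [hi, decide_eq_true_eq]
    have := pieceEquiv_lt (s := Aᶜ) (t := Bᶜ) (h := card_compl_eq h) (inc := d false)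
      (x := ⟨i, Finset.mem_compl.mpr hi⟩) (y := ⟨j, Finset.mem_compl.mpr hj⟩) hij
    cases hd : d false <;> simp [hd] at this ⊢ <;> exact this

/-- Uniqueness: a map which is strictly monotone/antitone along `s` into `t` is unique. -/
lemma uniq_on (s t : Finset (Fin n)) (h : s.card = t.card) (inc : Bool)
    (f g : Fin n → Fin n)
    (hf : ∀ i ∈ s, f i ∈ t) (hg : ∀ i ∈ s, g i ∈ t)
    (hf' : ∀ i ∈ s, ∀ j ∈ s, i < j → if inc then f i < f j else f j < f i)
    (hg' : ∀ i ∈ s, ∀ j ∈ s, i < j → if inc then g i < g j else g j < g i) :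
    ∀ i ∈ s, f i = g i := by
  have key : ∀ (f : Fin n → Fin n), (∀ i ∈ s, f i ∈ t) →
      (∀ i ∈ s, ∀ j ∈ s, i < j → if inc then f i < f j else f j < f i) →
      (fun m : Fin s.card => f (s.orderEmbOfFin rfl (if inc then m else m.rev))) =
        ⇑(t.orderEmbOfFin h.symm) := by
    intro f hf hf'
    apply Finset.orderEmbOfFin_unique
    · intro m
      exact hf _ (Finset.orderEmbOfFin_mem s rfl _)
    · intro m m' hmm'
      cases inc with
      | true =>
        have := hf' _ (Finset.orderEmbOfFin_mem s rfl m) _ (Finset.orderEmbOfFin_mem s rfl m')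
          ((s.orderEmbOfFin rfl).strictMono hmm')
        simpa using this
      | false =>
        have hrev : m'.rev < m.rev := Fin.rev_lt_rev.mpr hmm'
        have := hf' _ (Finset.orderEmbOfFin_mem s rfl m'.rev)
          _ (Finset.orderEmbOfFin_mem s rfl m.rev)
          ((s.orderEmbOfFin rfl).strictMono hrev)
        simpa using this
  have hfg := (key f hf hf').trans (key g hg hg').symm
  intro i hi
  have : i ∈ Set.range (s.orderEmbOfFin rfl) := by
    rw [Finset.range_orderEmbOfFin]; exact hi
  obtain ⟨m, hm⟩ := this
  have := congrFun hfg (if inc then m else m.rev)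
  cases inc with
  | true => simpa [hm] using this
  | false => simpa [Fin.rev_rev, hm] using this

def sgnSet {n : ℕ} (α : SignedPerm n) : Finset (Fin n) :=
  Finset.univ.filter (fun i => α.2 i = true)

def valSet {n : ℕ} (α : SignedPerm n) : Finset (Fin n) := (sgnSet α).image α.1

lemma card_valSet {n : ℕ} (α : SignedPerm n) : (sgnSet α).card = (valSet α).card :=
  (Finset.card_image_of_injective _ α.1.injective).symm

abbrev Pairs (n : ℕ) :=
  {AB : Finset (Fin n) × Finset (Fin n) // AB.1.card = AB.2.card}

noncomputable def encode {n : ℕ} (d : Bool → Bool) (α : {α : SignedPerm n // Good d α}) :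
    Pairs n :=
  ⟨(sgnSet α.1, valSet α.1), card_valSet α.1⟩

lemma good_mono {n : ℕ} (d : Bool → Bool) (α : SignedPerm n) (hα : Good d α) (b : Bool)
    (s : Finset (Fin n)) (hs : ∀ i, i ∈ s ↔ α.2 i = b) :
    ∀ i ∈ s, ∀ j ∈ s, i < j → if d b then α.1 i < α.1 j else α.1 j < α.1 i := by
  intro i hi j hj hij
  have hbi : α.2 i = b := (hs i).mp hi
  have hbj : α.2 j = b := (hs j).mp hj
  have := hα i j hij (hbi.trans hbj.symm)
  rwa [hbi] at this

lemma encode_injective {n : ℕ} (d : Bool → Bool) :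
    Function.Injective (encode (n := n) d) := by
  rintro ⟨α, hα⟩ ⟨β, hβ⟩ hab
  simp only [encode, Subtype.mk.injEq, Prod.mk.injEq] at hab
  obtain ⟨hS, hV⟩ := hab
  have hsgn : α.2 = β.2 := by
    funext i
    have : (i ∈ sgnSet α) = (i ∈ sgnSet β) := by rw [hS]
    simp only [sgnSet, Finset.mem_filter, Finset.mem_univ, true_and, eq_iff_iff] at this
    cases h1 : α.2 i <;> cases h2 : β.2 i <;> simp_all
  have hperm : ∀ i : Fin n, α.1 i = β.1 i := by
    have h1 : ∀ i ∈ sgnSet α, α.1 i = β.1 i := by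
      apply uniq_on (sgnSet α) (valSet α) (card_valSet α) (d true)
      · intro i hi
        exact Finset.mem_image_of_mem _ hi
      · intro i hi
        rw [hV]
        rw [hS] at hi
        exact Finset.mem_image_of_mem _ hi
      · exact good_mono d α hα true _ (by simp [sgnSet])
      · intro i hi j hj hij
        rw [hS] at hi hj
        exact good_mono d β hβ true (sgnSet β) (by simp [sgnSet]) i hi j hj hij
    have hcompl : (sgnSet α)ᶜ.card = (valSet α)ᶜ.card := card_compl_eq (card_valSet α)
    have himage : ∀ (γ : SignedPerm n), ∀ i ∈ (sgnSet γ)ᶜ, γ.1 i ∈ (valSet γ)ᶜ := by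
      intro γ i hi
      rw [Finset.mem_compl] at hi ⊢
      intro hmem
      obtain ⟨j, hj, hji⟩ := Finset.mem_image.mp hmem
      exact hi (by rwa [γ.1.injective hji] at hj)
    have h2 : ∀ i ∈ (sgnSet α)ᶜ, α.1 i = β.1 i := by
      apply uniq_on ((sgnSet α)ᶜ) ((valSet α)ᶜ) hcompl (d false)
      · exact himage α
      · intro i hi
        rw [hV]
        rw [hS] at hi
        exact himage β i hi
      · apply good_mono d α hα false
        intro i
        simp only [Finset.mem_compl, sgnSet, Finset.mem_filter, Finset.mem_univ, true_and]
        cases h1 : α.2 i <;> simp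
      · intro i hi j hj hij
        rw [hS] at hi hj
        refine good_mono d β hβ false ((sgnSet β)ᶜ) ?_ i hi j hj hij
        intro i
        simp only [Finset.mem_compl, sgnSet, Finset.mem_filter, Finset.mem_univ, true_and]
        cases h1 : β.2 i <;> simp
    intro i
    by_cases hi : i ∈ sgnSet α
    · exact h1 i hi
    · exact h2 i (Finset.mem_compl.mpr hi)
  have : α = β := Prod.ext (Equiv.ext hperm) hsgn
  simp [this]

lemma encode_surjective {n : ℕ} (d : Bool → Bool) :
    Function.Surjective (encode (n := n) d) := by
  rintro ⟨⟨A, B⟩, hAB⟩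
  refine ⟨⟨(buildPerm A B hAB d, fun i => decide (i ∈ A)), good_buildPerm A B hAB d⟩, ?_⟩
  have hsgn : sgnSet ((buildPerm A B hAB d, fun i => decide (i ∈ A)) : SignedPerm n) = A := by
    ext i; simp [sgnSet]
  have hval : valSet ((buildPerm A B hAB d, fun i => decide (i ∈ A)) : SignedPerm n) = B := by
    have hsub : valSet ((buildPerm A B hAB d, fun i => decide (i ∈ A)) : SignedPerm n) ⊆ B := by
      intro v hv
      simp only [valSet, hsgn, Finset.mem_image] at hv
      obtain ⟨i, hi, rfl⟩ := hv
      rw [buildPerm_apply_mem hAB d hi]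
      exact (pieceEquiv A B hAB (d true) ⟨i, hi⟩).2
    apply Finset.eq_of_subset_of_card_le hsub
    show B.card ≤ _
    have hc : B.card = A.card := hAB.symm
    rw [hc]
    exact le_of_eq ((congrArg Finset.card hsgn).symm.trans (card_valSet _))
  simp [encode, hsgn, hval]

lemma card_pairs (n : ℕ) : Nat.card (Pairs n) = Nat.choose (2 * n) n := by
  rw [Nat.card_eq_fintype_card]
  rw [Fintype.card_congr
    (Equiv.subtypeProdEquivSigmaSubtype (fun (A B : Finset (Fin n)) => A.card = B.card))]
  rw [Fintype.card_sigma]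
  have hinner : ∀ A : Finset (Fin n),
      Fintype.card {B : Finset (Fin n) // A.card = B.card} = n.choose A.card := by
    intro A
    rw [Fintype.card_congr (Equiv.subtypeEquivRight fun B => eq_comm)]
    rw [Fintype.card_finset_len, Fintype.card_fin]
  simp_rw [hinner]
  rw [← Finset.powerset_univ, Finset.sum_powerset_apply_card (fun m => n.choose m)]
  rw [Finset.card_univ, Fintype.card_fin]
  have hvdm := Nat.add_choose_eq n n n
  rw [Finset.Nat.sum_antidiagonal_eq_sum_range_succ_mk] at hvdm
  rw [two_mul, hvdm]
  refine Finset.sum_congr rfl fun k hk => ?_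
  rw [Finset.mem_range] at hk
  rw [Nat.choose_symm (by omega), smul_eq_mul]

lemma card_good (n : ℕ) (d : Bool → Bool) :
    Nat.card {α : SignedPerm n // Good d α} = Nat.choose (2 * n) n := by
  rw [Nat.card_congr (Equiv.ofBijective (encode d) ⟨encode_injective d, encode_surjective d⟩)]
  exact card_pairs n

lemma avoids_iff1 (α : SignedPerm n) :
    AvoidsAll {p12, p1b2b} α ↔ Good (fun _ => false) α := by
  constructor
  · intro hav i j hij hsign
    simp only [if_neg Bool.false_ne_true]
    by_contra hle
    have hne : α.1 i ≠ α.1 j := fun he => hij.ne (α.1.injective he)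
    have hlt : α.1 i < α.1 j := lt_of_le_of_ne (not_lt.mp hle) hne
    cases hb : α.2 i with
    | false =>
      exact hav p12 (by simp)
        ((contains_refl_iff α false false).mpr ⟨i, j, hij, hlt, hb, hsign.symm.trans hb⟩)
    | true =>
      exact hav p1b2b (by simp)
        ((contains_refl_iff α true true).mpr ⟨i, j, hij, hlt, hb, hsign.symm.trans hb⟩)
  · intro hgood τ hτ hcon
    rcases hτ with rfl | hτ
    · obtain ⟨i, j, hij, hlt, h0, h1⟩ := (contains_refl_iff α false false).mp hcon
      have := hgood i j hij (h0.trans h1.symm)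
      simp only [if_neg Bool.false_ne_true] at this
      exact absurd hlt (lt_asymm this)
    · rw [Set.mem_singleton_iff] at hτ
      subst hτ
      obtain ⟨i, j, hij, hlt, h0, h1⟩ := (contains_refl_iff α true true).mp hcon
      have := hgood i j hij (h0.trans h1.symm)
      simp only [if_neg Bool.false_ne_true] at this
      exact absurd hlt (lt_asymm this)

lemma avoids_iff2 (α : SignedPerm n) :
    AvoidsAll {p12, p2b1b} α ↔ Good (fun b => b) α := by
  constructor
  · intro hav i j hij hsign
    cases hb : α.2 i with
    | false =>
      simp only [hb, if_neg Bool.false_ne_true]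
      by_contra hle
      have hne : α.1 i ≠ α.1 j := fun he => hij.ne (α.1.injective he)
      have hlt : α.1 i < α.1 j := lt_of_le_of_ne (not_lt.mp hle) hne
      exact hav p12 (by simp)
        ((contains_refl_iff α false false).mpr ⟨i, j, hij, hlt, hb, hsign.symm.trans hb⟩)
    | true =>
      simp only [hb, if_pos rfl]
      by_contra hle
      have hne : α.1 j ≠ α.1 i := fun he => hij.ne.symm (α.1.injective he)
      have hlt : α.1 j < α.1 i := lt_of_le_of_ne (not_lt.mp hle) hne
      exact hav p2b1b (by simp)
        ((contains_swap_iff α true true).mpr ⟨i, j, hij, hlt, hb, hsign.symm.trans hb⟩)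
  · intro hgood τ hτ hcon
    rcases hτ with rfl | hτ
    · obtain ⟨i, j, hij, hlt, h0, h1⟩ := (contains_refl_iff α false false).mp hcon
      have := hgood i j hij (h0.trans h1.symm)
      rw [h0] at this
      simp only [if_neg Bool.false_ne_true] at this
      exact absurd hlt (lt_asymm this)
    · rw [Set.mem_singleton_iff] at hτ
      subst hτ
      obtain ⟨i, j, hij, hlt, h0, h1⟩ := (contains_swap_iff α true true).mp hcon
      have := hgood i j hij (h0.trans h1.symm)
      rw [h0] at this
      simp only [if_pos rfl] at this
      exact absurd hlt (lt_asymm this)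

end Aux

/-- b_n({12,1̄2̄}) = b_n({12,2̄1̄}) = C(2n,n). -/
theorem stmt1 (n : ℕ) :
    bn n {p12, p1b2b} = Nat.choose (2 * n) n ∧
    bn n {p12, p2b1b} = Nat.choose (2 * n) n := by
  constructor
  · show Nat.card _ = _
    rw [Nat.card_congr (Equiv.subtypeEquivRight fun α => avoids_iff1 α)]
    exact card_good n _
  · show Nat.card _ = _
    rw [Nat.card_congr (Equiv.subtypeEquivRight fun α => avoids_iff2 α)]
    exact card_good n _
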